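/- Let F be a cone with apex p and opening angle less than π/3. Let u and v be two points in F such that |up| ≤ r_u and |vp| ≤ r_v (where r_u, r_v > 0 are radii associated with u and v). If the orthogonal projection of v onto the angle bisector of F is strictly closer to p than the projection of u, then |uv| < |up|, and hence |uv| ≤ r_u. -/

import Mathlib

open Real

theorem stmt_0 (p u v b : EuclideanSpace ℝ (Fin 2)) (hb : ‖b‖ = 1)
    (α : ℝ) (hα : 0 < α) (hα' : α < π / 3)
    (ru rv : ℝ) (hru : 0 < ru) (hrv : 0 < rv)
    (hu : InnerProductGeometry.angle (u - p) b ≤ α / 2)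
    (hv : InnerProductGeometry.angle (v - p) b ≤ α / 2)
    (heu : dist u p ≤ ru) (hev : dist v p ≤ rv)
    (hproj : (inner ℝ (v - p) b : ℝ) < (inner ℝ (u - p) b : ℝ)) :
    dist u v < dist u p ∧ dist u v ≤ ru := by
  have hπ := Real.pi_pos
  set a : EuclideanSpace ℝ (Fin 2) := u - p with ha
  set c : EuclideanSpace ℝ (Fin 2) := v - p with hcdef
  set θa := InnerProductGeometry.angle a b with hθadef
  set θc := InnerProductGeometry.angle c b with hθcdef
  have hθa0 : 0 ≤ θa := InnerProductGeometry.angle_nonneg _ _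
  have hθc0 : 0 ≤ θc := InnerProductGeometry.angle_nonneg _ _
  have hθaπ : θa ≤ π := InnerProductGeometry.angle_le_pi _ _
  have hθcπ : θc ≤ π := InnerProductGeometry.angle_le_pi _ _
  -- c ≠ 0
  have hc0 : c ≠ 0 := by
    intro h
    rw [hθcdef, h, InnerProductGeometry.angle_zero_left] at hv
    linarith
  have hnc0 : (0:ℝ) < ‖c‖ := norm_pos_iff.mpr hc0
  -- positivity of cosines
  have hcosθc : 0 < Real.cos θc := by
    apply Real.cos_pos_of_mem_Ioo
    constructor <;> [linarith; linarith]
  have hcosθa : 0 < Real.cos θa := by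
    apply Real.cos_pos_of_mem_Ioo
    constructor <;> [linarith; linarith]
  -- inner c b = ‖c‖ * cos θc
  have ht : (inner ℝ c b : ℝ) = ‖c‖ * Real.cos θc := by
    have h := InnerProductGeometry.cos_angle c b
    rw [← hθcdef, hb, mul_one] at h
    have h2 := (div_eq_iff (ne_of_gt hnc0)).mp h.symm
    linarith
  have htpos : 0 < (inner ℝ c b : ℝ) := by rw [ht]; positivity
  have hspos : 0 < (inner ℝ a b : ℝ) := lt_trans htpos hproj
  have ha0 : a ≠ 0 := by
    intro h
    rw [h] at hspos
    simp at hspos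
  have hna0 : (0:ℝ) < ‖a‖ := norm_pos_iff.mpr ha0
  have hs : (inner ℝ a b : ℝ) = ‖a‖ * Real.cos θa := by
    have h := InnerProductGeometry.cos_angle a b
    rw [← hθadef, hb, mul_one] at h
    have h2 := (div_eq_iff (ne_of_gt hna0)).mp h.symm
    linarith
  -- perpendicular components
  set s : ℝ := inner ℝ a b with hsdef
  set t : ℝ := inner ℝ c b with htdef
  set a' : EuclideanSpace ℝ (Fin 2) := a - s • b with ha'def
  set c' : EuclideanSpace ℝ (Fin 2) := c - t • b with hc'def
  have hbb : (inner ℝ b b : ℝ) = 1 := by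
    rw [real_inner_self_eq_norm_sq, hb]; norm_num
  have hsinθa : 0 ≤ Real.sin θa := Real.sin_nonneg_of_nonneg_of_le_pi hθa0 hθaπ
  have hsinθc : 0 ≤ Real.sin θc := Real.sin_nonneg_of_nonneg_of_le_pi hθc0 hθcπ
  have hap : ‖a'‖ = ‖a‖ * Real.sin θa := by
    have hsq : ‖a'‖ ^ 2 = (‖a‖ * Real.sin θa) ^ 2 := by
      rw [ha'def, norm_sub_sq_real, norm_smul, real_inner_smul_right, hb]
      simp only [Real.norm_eq_abs]
      rw [abs_of_pos hspos, ← hsdef, hs]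
      linear_combination (-(‖a‖ ^ 2)) * Real.sin_sq_add_cos_sq θa
    exact (sq_eq_sq₀ (norm_nonneg _) (by positivity)).mp hsq
  have hcp : ‖c'‖ = ‖c‖ * Real.sin θc := by
    have hsq : ‖c'‖ ^ 2 = (‖c‖ * Real.sin θc) ^ 2 := by
      rw [hc'def, norm_sub_sq_real, norm_smul, real_inner_smul_right, hb]
      simp only [Real.norm_eq_abs]
      rw [abs_of_pos htpos, ← htdef, ht]
      linear_combination (-(‖c‖ ^ 2)) * Real.sin_sq_add_cos_sq θc
    exact (sq_eq_sq₀ (norm_nonneg _) (by positivity)).mp hsq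
  -- inner a c decomposition
  have hdecomp : (inner ℝ a c : ℝ) = s * t + (inner ℝ a' c' : ℝ) := by
    rw [ha'def, hc'def]
    simp only [inner_sub_left, inner_sub_right, real_inner_smul_left,
      real_inner_smul_right, hbb]
    have hbc : (inner ℝ b c : ℝ) = t := by
      rw [real_inner_comm]
    have hab : (inner ℝ a b : ℝ) = s := hsdef.symm
    rw [hbc, hab]
    ring
  have hiplb : (inner ℝ a' c' : ℝ) ≥ -(‖a'‖ * ‖c'‖) := by
    have := abs_real_inner_le_norm a' c'
    have := neg_abs_le (inner ℝ a' c' : ℝ)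
    linarith
  have h2 : (inner ℝ a c : ℝ) ≥ ‖a‖ * ‖c‖ * Real.cos (θa + θc) := by
    rw [Real.cos_add]
    have hrhs : ‖a‖ * ‖c‖ * (Real.cos θa * Real.cos θc - Real.sin θa * Real.sin θc)
        = s * t - ‖a'‖ * ‖c'‖ := by
      rw [hs, ht, hap, hcp]; ring
    linarith [hiplb, hdecomp, hrhs]
  -- key trig inequality
  have hkey : Real.cos θa ≤ 2 * Real.cos θc * Real.cos (θa + θc) := by
    have hnonneg : 0 ≤ Real.cos (θa + 2 * θc) := by
      apply Real.cos_nonneg_of_mem_Icc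
      constructor <;> [linarith; linarith]
    have hexpand : 2 * Real.cos θc * Real.cos (θa + θc) - Real.cos θa
        = Real.cos (θa + 2 * θc) := by
      rw [Real.cos_add θa θc, Real.cos_add θa (2 * θc), Real.cos_two_mul,
        Real.sin_two_mul]
      ring
    linarith
  -- nc < 2 na cos(θa+θc)
  have h1 : ‖c‖ < 2 * ‖a‖ * Real.cos (θa + θc) := by
    have hlt : ‖c‖ * Real.cos θc < ‖a‖ * Real.cos θa := by
      rw [← ht, ← hs]; exact hproj
    have hmul : ‖a‖ * Real.cos θa ≤ ‖a‖ * (2 * Real.cos θc * Real.cos (θa + θc)) :=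
      mul_le_mul_of_nonneg_left hkey (le_of_lt hna0)
    have heq : ‖a‖ * (2 * Real.cos θc * Real.cos (θa + θc))
        = (2 * ‖a‖ * Real.cos (θa + θc)) * Real.cos θc := by ring
    have hlt2 : ‖c‖ * Real.cos θc < (2 * ‖a‖ * Real.cos (θa + θc)) * Real.cos θc := by
      linarith [hlt, hmul, heq]
    exact lt_of_mul_lt_mul_right hlt2 (le_of_lt hcosθc)
  have h3 : ‖a - c‖ ^ 2 < ‖a‖ ^ 2 := by
    rw [norm_sub_sq_real]
    linarith [h2, mul_lt_mul_of_pos_left h1 hnc0]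
  have hlt : ‖a - c‖ < ‖a‖ := lt_of_pow_lt_pow_left₀ 2 (norm_nonneg a) h3
  have hd : dist u v = ‖a - c‖ := by
    rw [dist_eq_norm, ha, hcdef]
    congr 1
    abel
  have hd2 : dist u p = ‖a‖ := by rw [dist_eq_norm, ha]
  constructor
  · rw [hd, hd2]; exact hlt
  · rw [hd]; rw [hd2] at heu; linarith
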